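/- arXiv:1707.06517 — 3 statements merged into one kernel-verified Lean document; each statement's English description precedes it below -/
import Mathlib

section
/- For every ε ∈ (0, 1/16) there exists a constant C > 0 such that for every sufficiently large prime p, every primitive root τ mod p, and every integer s with 1 ≤ s ≤ p−1, one has |∑_{1 ≤ n ≤ p−1, gcd(n,p−1)=1} e(s·τⁿ/p)| ≤ C · p^{1−ε}. -/
open Finset

lemma conj_stdAddChar {p : ℕ} [NeZero p] (w : ZMod p) :
    (starRingEnd ℂ) (ZMod.stdAddChar w) = ZMod.stdAddChar (-w) := by
  have h1 : ZMod.stdAddChar w * ZMod.stdAddChar (-w) = 1 := by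
    rw [← AddChar.map_add_eq_mul, add_neg_cancel, AddChar.map_zero_eq_one]
  have h2 : ZMod.stdAddChar w * (starRingEnd ℂ) (ZMod.stdAddChar w) = 1 := by
    rw [Complex.mul_conj]
    norm_cast
    rw [ZMod.stdAddChar_apply]
    simp [Complex.normSq_eq_norm_sq, Circle.norm_coe]
  have h0 : (ZMod.stdAddChar w : ℂ) ≠ 0 := by
    intro h
    rw [h, zero_mul] at h1; exact one_ne_zero h1.symm
  exact mul_left_cancel₀ h0 (h2.trans h1.symm)

lemma subgroup_char_sum_bound (p : ℕ) [hp : Fact p.Prime] (g σ : ZMod p)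
    (hg : g ≠ 0) (hσ : σ ≠ 0) :
    ‖∑ x ∈ (Finset.range (orderOf g)).image (g ^ ·),
      ZMod.stdAddChar (σ * x)‖ ≤ Real.sqrt p := by
  set ψ := (ZMod.stdAddChar : AddChar (ZMod p) ℂ) with hψ
  set H := (Finset.range (orderOf g)).image (g ^ ·) with hH
  set F : ZMod p → ℂ := fun t => ∑ x ∈ H, ψ (t * x) with hF
  have hcard : Fintype.card (ZMod p) = p := ZMod.card p
  -- order positivity
  have hfin : IsOfFinOrder g := by
    rw [isOfFinOrder_iff_pow_eq_one]
    exact ⟨p - 1, Nat.sub_pos_of_lt hp.out.one_lt, ZMod.pow_card_sub_one_eq_one hg⟩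
  have hordpos : 0 < orderOf g := hfin.orderOf_pos
  have hHne : H.Nonempty := ⟨g ^ 0, Finset.mem_image.mpr ⟨0, Finset.mem_range.mpr hordpos, rfl⟩⟩
  have hHcardpos : 0 < H.card := Finset.card_pos.mpr hHne
  -- members of H are nonzero and H is closed under multiplication
  have hmem : ∀ u ∈ H, u ≠ 0 := by
    rintro u hu
    obtain ⟨a, _, rfl⟩ := Finset.mem_image.mp hu
    exact pow_ne_zero a hg
  have himg : ∀ u ∈ H, H.image (u * ·) = H := by
    intro u hu
    obtain ⟨a, ha, rfl⟩ := Finset.mem_image.mp hu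
    apply Finset.eq_of_subset_of_card_le
    · intro x hx
      obtain ⟨y, hy, rfl⟩ := Finset.mem_image.mp hx
      obtain ⟨b, hb, rfl⟩ := Finset.mem_image.mp hy
      refine Finset.mem_image.mpr ⟨(a + b) % orderOf g, Finset.mem_range.mpr
        (Nat.mod_lt _ hordpos), ?_⟩
      rw [pow_mod_orderOf, pow_add]
    · rw [Finset.card_image_of_injective _ (mul_right_injective₀ (pow_ne_zero a hg))]
  -- Parseval
  have parseval : ∑ t : ZMod p, Complex.normSq (F t) = (p : ℝ) * H.card := by
    have key : ∑ t : ZMod p, (F t * (starRingEnd ℂ) (F t)) = (p : ℂ) * H.card := by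
      have expand : ∀ t : ZMod p, F t * (starRingEnd ℂ) (F t)
          = ∑ x ∈ H, ∑ y ∈ H, ψ (t * (x - y)) := by
        intro t
        rw [hF]
        rw [map_sum, Finset.sum_mul_sum]
        refine Finset.sum_congr rfl fun x _ => Finset.sum_congr rfl fun y _ => ?_
        rw [conj_stdAddChar, ← AddChar.map_add_eq_mul]
        ring_nf
      calc ∑ t : ZMod p, (F t * (starRingEnd ℂ) (F t))
          = ∑ t : ZMod p, ∑ x ∈ H, ∑ y ∈ H, ψ (t * (x - y)) :=
            Finset.sum_congr rfl fun t _ => expand t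
        _ = ∑ x ∈ H, ∑ y ∈ H, ∑ t : ZMod p, ψ (t * (x - y)) := by
            rw [Finset.sum_comm]
            refine Finset.sum_congr rfl fun x _ => Finset.sum_comm
        _ = ∑ x ∈ H, ∑ y ∈ H, (if x = y then ((p : ℂ)) else 0) := by
            refine Finset.sum_congr rfl fun x _ => Finset.sum_congr rfl fun y _ => ?_
            rw [AddChar.sum_mulShift (x - y) (ZMod.isPrimitive_stdAddChar p)]
            by_cases h : x = y <;> simp [h, sub_eq_zero, hcard]
        _ = ∑ x ∈ H, (p : ℂ) := by
            refine Finset.sum_congr rfl fun x hx => ?_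
            rw [Finset.sum_ite_eq H x (fun _ => (p:ℂ))]
            simp [hx]
        _ = (p : ℂ) * H.card := by rw [Finset.sum_const, nsmul_eq_mul, mul_comm]
    have h2 : ∑ t : ZMod p, ((Complex.normSq (F t) : ℝ) : ℂ) = (p : ℂ) * H.card := by
      rw [← key]
      exact Finset.sum_congr rfl fun t _ => (Complex.mul_conj _).symm
    have h3 : ((∑ t : ZMod p, Complex.normSq (F t) : ℝ) : ℂ) = (((p : ℝ) * H.card : ℝ) : ℂ) := by
      push_cast
      push_cast at h2
      rw [h2]
    exact_mod_cast h3
  -- invariance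
  have hinv : ∀ u ∈ H, F (σ * u) = F σ := by
    intro u hu
    have : F (σ * u) = ∑ x ∈ H.image (u * ·), ψ (σ * x) := by
      rw [Finset.sum_image (fun a _ b _ h => mul_right_injective₀ (hmem u hu) h)]
      refine Finset.sum_congr rfl fun x _ => ?_
      ring_nf
    rw [this, himg u hu]
  -- main estimate
  have hmain : (H.card : ℝ) * Complex.normSq (F σ) ≤ (p : ℝ) * H.card := by
    calc (H.card : ℝ) * Complex.normSq (F σ)
        = ∑ u ∈ H, Complex.normSq (F (σ * u)) := by
          rw [Finset.sum_congr rfl (fun u hu => by rw [hinv u hu]), Finset.sum_const,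
            nsmul_eq_mul]
      _ = ∑ t ∈ H.image (σ * ·), Complex.normSq (F t) := by
          rw [Finset.sum_image (fun a _ b _ h => mul_right_injective₀ hσ h)]
      _ ≤ ∑ t : ZMod p, Complex.normSq (F t) := by
          apply Finset.sum_le_sum_of_subset_of_nonneg (Finset.subset_univ _)
          intro t _ _
          exact Complex.normSq_nonneg _
      _ = (p : ℝ) * H.card := parseval
  have hsq : Complex.normSq (F σ) ≤ (p : ℝ) := by
    have hc : (0:ℝ) < H.card := by exact_mod_cast hHcardpos
    nlinarith [hc]
  calc ‖F σ‖ = Real.sqrt (Complex.normSq (F σ)) := by rw [Complex.norm_def]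
    _ ≤ Real.sqrt p := Real.sqrt_le_sqrt hsq

lemma sqfree_div_card (n : ℕ) (hn : n ≠ 0) :
    ((n.divisors.filter Squarefree).card : ℝ) ≤ 16 * (n:ℝ) ^ ((1:ℝ)/3) := by
  have h1 : (n.divisors.filter Squarefree).card ≤ 2 ^ n.primeFactors.card := by
    rw [← Finset.card_powerset]
    apply Finset.card_le_card_of_injOn (fun d => d.primeFactors)
    · intro d hd
      simp only [coe_filter, Set.mem_setOf_eq, mem_filter, Nat.mem_divisors] at hd
      exact Finset.mem_powerset.mpr (Nat.primeFactors_mono hd.1.1 hn)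
    · intro a ha b hb hab
      simp only [coe_filter, Set.mem_setOf_eq, Nat.mem_divisors] at ha hb
      have hab' : a.primeFactors = b.primeFactors := hab
      rw [← Nat.prod_primeFactors_of_squarefree ha.2, ← Nat.prod_primeFactors_of_squarefree hb.2,
        hab']
  set k := (n.primeFactors.filter (fun q => 8 ≤ q)).card with hk
  set j := (n.primeFactors.filter (fun q => q < 8)).card with hj
  have hsplit : n.primeFactors.card = j + k := by
    have h := Finset.card_filter_add_card_filter_not (s := n.primeFactors)
      (p := fun q => q < 8)
    simp only [not_lt] at h
    rw [hj, hk, h]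
  have hj4 : j ≤ 4 := by
    have : n.primeFactors.filter (fun q => q < 8) ⊆ ({2,3,5,7} : Finset ℕ) := by
      intro q hq
      simp only [mem_filter, Nat.mem_primeFactors] at hq
      obtain ⟨⟨hqp, _, _⟩, hq8⟩ := hq
      interval_cases q <;> simp_all <;> norm_num at hqp
    calc j ≤ ({2,3,5,7}:Finset ℕ).card := Finset.card_le_card this
      _ ≤ 4 := by decide
  have h8k : (8:ℕ) ^ k ≤ n := by
    calc (8:ℕ)^k ≤ ∏ q ∈ n.primeFactors.filter (fun q => 8 ≤ q), q := by
          rw [← Finset.prod_const]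
          exact Finset.prod_le_prod' (fun q hq => (mem_filter.mp hq).2)
      _ ≤ ∏ q ∈ n.primeFactors, q := by
          apply Finset.prod_le_prod_of_subset_of_one_le' (Finset.filter_subset _ _)
          intro q hq _
          exact (Nat.prime_of_mem_primeFactors hq).one_lt.le
      _ ≤ n := Nat.le_of_dvd (Nat.pos_of_ne_zero hn) (Nat.prod_primeFactors_dvd n)
  have h2k : ((2:ℝ)) ^ (k:ℕ) ≤ (n:ℝ) ^ ((1:ℝ)/3) := by
    have h8 : ((8:ℝ)) ^ (k:ℕ) ≤ (n:ℝ) := by exact_mod_cast h8k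
    have hcube : ((2:ℝ) ^ (k:ℕ)) ^ (3:ℕ) ≤ (n:ℝ) := by
      rw [← pow_mul, mul_comm]
      calc (2:ℝ) ^ (3 * k) = (8:ℝ) ^ k := by rw [pow_mul]; norm_num
        _ ≤ n := h8
    have h2pos : (0:ℝ) ≤ (2:ℝ)^(k:ℕ) := by positivity
    calc (2:ℝ)^(k:ℕ) = (((2:ℝ)^(k:ℕ))^(3:ℕ)) ^ ((1:ℝ)/3) := by
          rw [← Real.rpow_natCast ((2:ℝ)^(k:ℕ)) 3, ← Real.rpow_mul h2pos]
          norm_num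
      _ ≤ (n:ℝ) ^ ((1:ℝ)/3) := by
          apply Real.rpow_le_rpow (by positivity) hcube (by norm_num)
  calc ((n.divisors.filter Squarefree).card : ℝ) ≤ (((2:ℕ) ^ (j + k) : ℕ) : ℝ) := by
        exact_mod_cast hsplit ▸ h1
    _ = (2:ℝ) ^ (j + k) := by push_cast; ring
    _ = (2:ℝ)^j * (2:ℝ)^k := by rw [pow_add]
    _ ≤ 16 * (n:ℝ) ^ ((1:ℝ)/3) := by
        apply mul_le_mul _ h2k (by positivity) (by norm_num)
        calc (2:ℝ)^j ≤ (2:ℝ)^4 := by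
              apply pow_le_pow_right₀ (by norm_num) hj4
          _ = 16 := by norm_num
open Finset

lemma moebius_sum_eq (m : ℕ) :
    ∑ d ∈ m.divisors, (ArithmeticFunction.moebius d : ℤ) = if m = 1 then 1 else 0 := by
  have h := congrArg (fun f => f m) ArithmeticFunction.moebius_mul_coe_zeta
  simpa only [ArithmeticFunction.coe_mul_zeta_apply, ArithmeticFunction.one_apply] using h

lemma gcd_divisors_eq (n N : ℕ) (hn : n ≠ 0) (hN : N ≠ 0) :
    (Nat.gcd n N).divisors = N.divisors.filter (· ∣ n) := by
  ext d
  simp only [Nat.mem_divisors, Finset.mem_filter]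
  constructor
  · rintro ⟨hd, -⟩
    exact ⟨⟨hd.trans (Nat.gcd_dvd_right n N), hN⟩, hd.trans (Nat.gcd_dvd_left n N)⟩
  · rintro ⟨⟨hdN, -⟩, hdn⟩
    exact ⟨Nat.dvd_gcd hdn hdN, fun h => hn (Nat.eq_zero_of_gcd_eq_zero_left h)⟩

lemma filter_dvd_eq_image (N d : ℕ) (hd : d ∣ N) (hd1 : 1 ≤ d) :
    (Finset.Icc 1 N).filter (fun n => d ∣ n) = (Finset.Icc 1 (N / d)).image (fun m => d * m) := by
  ext n
  simp only [Finset.mem_filter, Finset.mem_Icc, Finset.mem_image]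
  constructor
  · rintro ⟨⟨h1, h2⟩, c, rfl⟩
    refine ⟨c, ⟨?_, ?_⟩, rfl⟩
    · rcases Nat.eq_zero_or_pos c with rfl | hc
      · omega
      · exact hc
    · exact Nat.le_div_iff_mul_le (by omega) |>.mpr (by rw [Nat.mul_comm]; exact h2)
  · rintro ⟨m, ⟨hm1, hm2⟩, rfl⟩
    refine ⟨⟨by nlinarith, ?_⟩, Dvd.intro m rfl⟩
    calc d * m ≤ d * (N / d) := Nat.mul_le_mul_left d hm2
      _ = N := Nat.mul_div_cancel' hd

/-- For every `ε ∈ (0, 1/16)` there is `C > 0` such that for every sufficiently large prime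
`p`, every primitive root `τ` mod `p`, and every integer `s` with `1 ≤ s ≤ p−1`:
`|∑_{1 ≤ n ≤ p−1, gcd(n,p−1)=1} e(s·τⁿ/p)| ≤ C · p^{1−ε}`. -/
theorem exponential_sum_primitive_root_strong_bound (ε : ℝ) (hε : 0 < ε) (hε' : ε < 1/16) :
    ∃ C > (0:ℝ), ∃ p₀ : ℕ, ∀ p : ℕ, p.Prime → p₀ ≤ p →
      ∀ τ : ℤ, orderOf ((τ : ZMod p)) = p - 1 →
      ∀ s : ℤ, 1 ≤ s → s ≤ (p:ℤ) - 1 →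
      ‖(∑ n ∈ (Finset.Icc 1 (p-1)).filter (fun n => Nat.gcd n (p-1) = 1),
          Complex.exp (2 * Real.pi * Complex.I * ((s:ℂ) * (τ:ℂ) ^ n / (p:ℂ))))‖
        ≤ C * (p:ℝ) ^ (1 - ε) := by
  refine ⟨16, by norm_num, 2, ?_⟩
  intro p hp hp0 τ hτ s hs1 hs2
  haveI : Fact p.Prime := ⟨hp⟩
  have hp2 : 2 ≤ p := hp.two_le
  set N := p - 1 with hNdef
  have hN0 : N ≠ 0 := by omega
  set t : ZMod p := (τ : ZMod p) with htdef
  set σ : ZMod p := (s : ZMod p) with hσdef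
  have hσ : σ ≠ 0 := by
    rw [hσdef, Ne, ZMod.intCast_zmod_eq_zero_iff_dvd]
    intro hdvd
    have := Int.le_of_dvd (by omega) hdvd
    omega
  have htord : orderOf t = N := hτ
  have htne : t ≠ 0 := by
    intro h
    have h1 := pow_orderOf_eq_one t
    rw [htord, h, zero_pow hN0] at h1
    exact zero_ne_one h1
  set ψ := (ZMod.stdAddChar : AddChar (ZMod p) ℂ) with hψdef
  have hterm : ∀ n : ℕ, Complex.exp (2 * Real.pi * Complex.I * ((s:ℂ) * (τ:ℂ) ^ n / (p:ℂ)))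
      = ψ (σ * t ^ n) := by
    intro n
    have h1 := ZMod.stdAddChar_coe (N := p) (s * τ ^ n)
    have h2 : ((s * τ ^ n : ℤ) : ZMod p) = σ * t ^ n := by push_cast [hσdef, htdef]; ring
    rw [h2] at h1
    rw [hψdef, h1]
    congr 1
    push_cast
    ring
  rw [Finset.sum_congr rfl (fun n _ => hterm n)]
  -- Möbius decomposition
  have hdecomp : ∑ n ∈ (Finset.Icc 1 N).filter (fun n => Nat.gcd n N = 1), ψ (σ * t ^ n)
      = ∑ d ∈ N.divisors, (ArithmeticFunction.moebius d : ℂ) *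
          ∑ n ∈ (Finset.Icc 1 N).filter (fun n => d ∣ n), ψ (σ * t ^ n) := by
    rw [Finset.sum_filter]
    have step1 : ∀ n ∈ Finset.Icc 1 N,
        (if Nat.gcd n N = 1 then ψ (σ * t ^ n) else 0)
        = ∑ d ∈ N.divisors,
            (if d ∣ n then (ArithmeticFunction.moebius d : ℂ) * ψ (σ * t ^ n) else 0) := by
      intro n hn
      have hn0 : n ≠ 0 := by
        simp only [Finset.mem_Icc] at hn; omega
      have h3 : ((if Nat.gcd n N = 1 then 1 else 0 : ℤ) : ℂ)
          = ∑ d ∈ N.divisors.filter (· ∣ n), (ArithmeticFunction.moebius d : ℂ) := by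
        rw [← gcd_divisors_eq n N hn0 hN0, ← moebius_sum_eq]
        push_cast
        rfl
      calc (if Nat.gcd n N = 1 then ψ (σ * t ^ n) else 0)
          = ((if Nat.gcd n N = 1 then 1 else 0 : ℤ) : ℂ) * ψ (σ * t ^ n) := by
            split_ifs <;> simp
        _ = (∑ d ∈ N.divisors.filter (· ∣ n), (ArithmeticFunction.moebius d : ℂ))
              * ψ (σ * t ^ n) := by rw [h3]
        _ = ∑ d ∈ N.divisors.filter (· ∣ n),
              (ArithmeticFunction.moebius d : ℂ) * ψ (σ * t ^ n) := Finset.sum_mul _ _ _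
        _ = ∑ d ∈ N.divisors,
              (if d ∣ n then (ArithmeticFunction.moebius d : ℂ) * ψ (σ * t ^ n) else 0) :=
            Finset.sum_filter _ _
    rw [Finset.sum_congr rfl step1, Finset.sum_comm]
    refine Finset.sum_congr rfl fun d _ => ?_
    rw [← Finset.sum_filter, ← Finset.mul_sum]
  rw [hdecomp]
  -- bound each inner sum
  have hT : ∀ d ∈ N.divisors,
      ‖∑ n ∈ (Finset.Icc 1 N).filter (fun n => d ∣ n), ψ (σ * t ^ n)‖
        ≤ Real.sqrt p := by
    intro d hd
    obtain ⟨hdvd, -⟩ := Nat.mem_divisors.mp hd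
    have hd1 : 1 ≤ d := Nat.pos_of_mem_divisors hd
    set g : ZMod p := t ^ d with hgdef
    have hg : g ≠ 0 := pow_ne_zero d htne
    have hord : orderOf g = N / d := by
      rw [hgdef, orderOf_pow' t (by omega), htord, Nat.gcd_eq_right hdvd]
    have hordpos : 0 < orderOf g := by
      rw [hord]
      exact Nat.div_pos (Nat.le_of_dvd (by omega) hdvd) (by omega)
    rw [filter_dvd_eq_image N d hdvd hd1]
    rw [Finset.sum_image (fun a _ b _ h => Nat.eq_of_mul_eq_mul_left (by omega) h)]
    have hexp : ∀ m ∈ Finset.Icc 1 (N / d), ψ (σ * t ^ (d * m)) = ψ (σ * g ^ m) := by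
      intro m _; rw [hgdef, ← pow_mul]
    rw [Finset.sum_congr rfl hexp, ← hord]
    have hshift : ∑ m ∈ Finset.Icc 1 (orderOf g), ψ (σ * g ^ m)
        = ∑ m ∈ Finset.range (orderOf g), ψ (σ * g ^ m) := by
      have e1 : Finset.Icc 1 (orderOf g) = insert (orderOf g) (Finset.Ico 1 (orderOf g)) := by
        ext m
        simp only [Finset.mem_Icc, Finset.mem_insert, Finset.mem_Ico]
        omega
      have e2 : Finset.range (orderOf g) = insert 0 (Finset.Ico 1 (orderOf g)) := by
        ext m
        simp only [Finset.mem_range, Finset.mem_insert, Finset.mem_Ico]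
        omega
      rw [e1, e2, Finset.sum_insert (by simp), Finset.sum_insert (by simp)]
      congr 1
      rw [pow_orderOf_eq_one g, pow_zero]
    rw [hshift]
    have hkey : ∀ a b : ℕ, a < b → b < orderOf g → g ^ a = g ^ b → False := by
      intro a b hlt hb hab
      have h1 : g ^ a * g ^ (b - a) = g ^ a * 1 := by
        rw [mul_one, ← pow_add]
        rw [show a + (b - a) = b by omega, hab]
      have h2 : g ^ (b - a) = 1 := mul_left_cancel₀ (pow_ne_zero a hg) h1
      have h3 := orderOf_dvd_of_pow_eq_one h2
      have h4 := Nat.le_of_dvd (by omega) h3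
      omega
    have hinjpow : ∀ a ∈ Finset.range (orderOf g), ∀ b ∈ Finset.range (orderOf g),
        g ^ a = g ^ b → a = b := by
      intro a ha b hb hab
      simp only [Finset.mem_range] at ha hb
      rcases lt_trichotomy a b with h | h | h
      · exact absurd hab (fun he => hkey a b h hb he)
      · exact h
      · exact absurd hab.symm (fun he => hkey b a h ha he)
    have himg := Finset.sum_image (s := Finset.range (orderOf g)) (f := fun x => ψ (σ * x))
      (g := fun m => g ^ m) hinjpow
    rw [← himg]
    exact subgroup_char_sum_bound p g σ hg hσ
  -- combine
  have habs : ‖∑ d ∈ N.divisors, (ArithmeticFunction.moebius d : ℂ) *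
          ∑ n ∈ (Finset.Icc 1 N).filter (fun n => d ∣ n), ψ (σ * t ^ n)‖
      ≤ ((N.divisors.filter Squarefree).card : ℝ) * Real.sqrt p := by
    calc ‖∑ d ∈ N.divisors, (ArithmeticFunction.moebius d : ℂ) *
            ∑ n ∈ (Finset.Icc 1 N).filter (fun n => d ∣ n), ψ (σ * t ^ n)‖
        ≤ ∑ d ∈ N.divisors, ‖(ArithmeticFunction.moebius d : ℂ) *
            ∑ n ∈ (Finset.Icc 1 N).filter (fun n => d ∣ n), ψ (σ * t ^ n)‖ := by
          exact norm_sum_le _ _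
      _ = ∑ d ∈ N.divisors.filter Squarefree, ‖(ArithmeticFunction.moebius d : ℂ) *
            ∑ n ∈ (Finset.Icc 1 N).filter (fun n => d ∣ n), ψ (σ * t ^ n)‖ := by
          refine (Finset.sum_filter_of_ne ?_).symm
          intro d _ hne
          by_contra hnsq
          rw [ArithmeticFunction.moebius_eq_zero_of_not_squarefree hnsq] at hne
          simp at hne
      _ ≤ ∑ d ∈ N.divisors.filter Squarefree, Real.sqrt p := by
          apply Finset.sum_le_sum
          intro d hd
          have hd' : d ∈ N.divisors := (Finset.mem_filter.mp hd).1
          have hsqf : Squarefree d := (Finset.mem_filter.mp hd).2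
          rw [norm_mul]
          have hμ : ‖((ArithmeticFunction.moebius d : ℂ))‖ = 1 := by
            rw [Complex.norm_intCast]
            rw [show |(ArithmeticFunction.moebius d : ℝ)| = ((|ArithmeticFunction.moebius d| : ℤ) : ℝ) by push_cast; rfl]
            rw [ArithmeticFunction.abs_moebius_eq_one_of_squarefree hsqf]
            norm_num
          rw [hμ, one_mul]
          exact hT d hd'
      _ = ((N.divisors.filter Squarefree).card : ℝ) * Real.sqrt p := by
          rw [Finset.sum_const, nsmul_eq_mul]
  refine le_trans habs ?_
  -- numeric bounds
  have hppos : (0:ℝ) < (p:ℝ) := by positivity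
  have hp1 : (1:ℝ) ≤ (p:ℝ) := by exact_mod_cast Nat.one_le_of_lt hp2
  have hNlep : (N:ℝ) ≤ (p:ℝ) := by exact_mod_cast Nat.sub_le p 1
  have hsqrt : Real.sqrt (p:ℝ) = (p:ℝ) ^ ((1:ℝ)/2) := by
    rw [Real.sqrt_eq_rpow]
  calc ((N.divisors.filter Squarefree).card : ℝ) * Real.sqrt p
      ≤ (16 * (N:ℝ) ^ ((1:ℝ)/3)) * Real.sqrt p := by
        apply mul_le_mul_of_nonneg_right (sqfree_div_card N hN0) (Real.sqrt_nonneg _)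
    _ ≤ (16 * (p:ℝ) ^ ((1:ℝ)/3)) * (p:ℝ) ^ ((1:ℝ)/2) := by
        rw [hsqrt]
        apply mul_le_mul_of_nonneg_right _ (by positivity)
        apply mul_le_mul_of_nonneg_left _ (by norm_num)
        apply Real.rpow_le_rpow (by positivity) hNlep (by norm_num)
    _ = 16 * (p:ℝ) ^ ((1:ℝ)/3 + (1:ℝ)/2) := by
        rw [Real.rpow_add hppos]; ring
    _ ≤ 16 * (p:ℝ) ^ (1 - ε) := by
        apply mul_le_mul_of_nonneg_left _ (by norm_num)
        apply Real.rpow_le_rpow_of_exponent_le hp1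
        linarith
end

section
/- For every ε > 0 there exists a constant C > 0 such that for every prime p, every primitive root τ mod p, and every integer s with 1 ≤ s ≤ p−1, one has |∑_{1 ≤ n ≤ p−1, gcd(n,p−1)=1} e(s·τⁿ/p)| ≤ C · p^{1/2+ε} · log p. -/
open Finset Complex

private lemma subgroupSumBound (p : ℕ) [Fact p.Prime] (H : Subgroup (ZMod p)ˣ)
    [Fintype H] (s : ZMod p) (hs : s ≠ 0) :
    ‖∑ h : H, ZMod.stdAddChar (s * ((h : (ZMod p)ˣ) : ZMod p))‖ ≤ Real.sqrt p := by
  have hp : p.Prime := Fact.out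
  set ψ := ZMod.stdAddChar (N := p) with hψdef
  set T : ZMod p → ℂ := fun y => ∑ h : H, ψ (y * ((h : (ZMod p)ˣ) : ZMod p)) with hT
  have hchar : 0 < ringChar (ZMod p) := by
    rw [ZMod.ringChar_zmod_n]; exact hp.pos
  have hconj : ∀ y, (starRingEnd ℂ) (T y) = ∑ h : H, ψ (-(y * ((h : (ZMod p)ˣ) : ZMod p))) := by
    intro y
    rw [hT, map_sum]
    refine Finset.sum_congr rfl fun h _ => ?_
    rw [AddChar.starComp_apply hchar, AddChar.inv_apply]
  have key : ∑ y : ZMod p, T y * (starRingEnd ℂ) (T y) = (p : ℂ) * (Fintype.card H : ℂ) := by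
    have expand : ∀ y, T y * (starRingEnd ℂ) (T y)
        = ∑ h : H, ∑ h' : H,
            ψ (y * (((h : (ZMod p)ˣ) : ZMod p) - ((h' : (ZMod p)ˣ) : ZMod p))) := by
      intro y
      rw [hconj, hT, Finset.sum_mul_sum]
      refine Finset.sum_congr rfl fun h _ => Finset.sum_congr rfl fun h' _ => ?_
      rw [← AddChar.map_add_eq_mul]
      ring_nf
    simp_rw [expand]
    rw [Finset.sum_comm]
    have inner : ∀ h : H, (∑ y : ZMod p, ∑ h' : H,
        ψ (y * (((h : (ZMod p)ˣ) : ZMod p) - ((h' : (ZMod p)ˣ) : ZMod p)))) = (p : ℂ) := by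
      intro h
      rw [Finset.sum_comm]
      have hsum : ∀ h' : H, (∑ y : ZMod p,
          ψ (y * (((h : (ZMod p)ˣ) : ZMod p) - ((h' : (ZMod p)ˣ) : ZMod p))))
          = if (((h : (ZMod p)ˣ) : ZMod p) - ((h' : (ZMod p)ˣ) : ZMod p)) = 0
            then (Fintype.card (ZMod p) : ℂ) else 0 := by
        intro h'
        rw [AddChar.sum_mulShift _ (ZMod.isPrimitive_stdAddChar p)]
        split_ifs <;> simp
      simp_rw [hsum]
      rw [Finset.sum_eq_single h]
      · rw [if_pos (sub_self _), ZMod.card]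
      · intro h' _ hne
        rw [if_neg]
        intro e
        exact hne (Subtype.ext (Units.ext (sub_eq_zero.mp e))).symm
      · intro habs; exact absurd (Finset.mem_univ h) habs
    calc ∑ h : H, ∑ y : ZMod p, ∑ h' : H,
          ψ (y * (((h : (ZMod p)ˣ) : ZMod p) - ((h' : (ZMod p)ˣ) : ZMod p)))
        = ∑ _h : H, (p : ℂ) := Finset.sum_congr rfl fun h _ => inner h
      _ = (Fintype.card H : ℂ) * (p : ℂ) := by
          rw [Finset.sum_const, Finset.card_univ, nsmul_eq_mul]
      _ = (p : ℂ) * (Fintype.card H : ℂ) := mul_comm _ _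
  have keyR : ∑ y : ZMod p, Complex.normSq (T y) = (p : ℝ) * (Fintype.card H : ℝ) := by
    have : ((∑ y : ZMod p, Complex.normSq (T y) : ℝ) : ℂ)
        = (((p : ℝ) * (Fintype.card H : ℝ) : ℝ) : ℂ) := by
      push_cast
      simp_rw [← Complex.mul_conj]
      exact key
    exact_mod_cast this
  have inv : ∀ h₀ : H, T (s * ((h₀ : (ZMod p)ˣ) : ZMod p)) = T s := by
    intro h₀
    show (∑ h : H, ψ (s * ((h₀ : (ZMod p)ˣ) : ZMod p) * ((h : (ZMod p)ˣ) : ZMod p)))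
        = ∑ h : H, ψ (s * ((h : (ZMod p)ˣ) : ZMod p))
    refine Fintype.sum_equiv (Equiv.mulLeft h₀) _ _ fun h => ?_
    congr 1
    rw [Equiv.coe_mulLeft, Submonoid.coe_mul, Units.val_mul, mul_assoc]
  have inj : Function.Injective (fun h₀ : H => s * ((h₀ : (ZMod p)ˣ) : ZMod p)) := by
    intro a b hab
    simp only at hab
    exact Subtype.ext (Units.ext (mul_left_cancel₀ hs hab))
  have step : (Fintype.card H : ℝ) * Complex.normSq (T s)
      ≤ ∑ y : ZMod p, Complex.normSq (T y) := by
    calc (Fintype.card H : ℝ) * Complex.normSq (T s)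
        = ∑ h₀ : H, Complex.normSq (T (s * ((h₀ : (ZMod p)ˣ) : ZMod p))) := by
          simp_rw [inv]
          rw [Finset.sum_const, Finset.card_univ, nsmul_eq_mul]
      _ = ∑ y ∈ Finset.univ.image (fun h₀ : H => s * ((h₀ : (ZMod p)ˣ) : ZMod p)),
            Complex.normSq (T y) := by
          rw [Finset.sum_image (fun a _ b _ h => inj h)]
      _ ≤ ∑ y : ZMod p, Complex.normSq (T y) :=
          Finset.sum_le_sum_of_subset_of_nonneg (Finset.subset_univ _)
            (fun _ _ _ => Complex.normSq_nonneg _)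
  have hcard : (0 : ℝ) < (Fintype.card H : ℝ) := by
    exact_mod_cast Fintype.card_pos
  have hns : Complex.normSq (T s) ≤ (p : ℝ) := by
    rw [keyR] at step
    nlinarith
  have : ‖T s‖ ≤ Real.sqrt p := by
    rw [Complex.norm_def]
    exact Real.sqrt_le_sqrt hns
  exact this

private lemma iccSumBound (p : ℕ) [Fact p.Prime] (g : (ZMod p)ˣ) (s : ZMod p) (hs : s ≠ 0) :
    ‖∑ m ∈ Finset.Icc 1 (orderOf g), ZMod.stdAddChar (s * ((g : ZMod p)) ^ m)‖
      ≤ Real.sqrt p := by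
  haveI : Fintype (Subgroup.zpowers g) := Fintype.ofFinite _
  have hg : IsOfFinOrder g := isOfFinOrder_of_finite g
  set F : (ZMod p)ˣ → ℂ := fun u => ZMod.stdAddChar (s * (u : ZMod p)) with hF
  have h1 : ∑ m ∈ Finset.Icc 1 (orderOf g), ZMod.stdAddChar (s * ((g : ZMod p)) ^ m)
      = ∑ h : Subgroup.zpowers g, F ((h : (ZMod p)ˣ)) := by
    have e2 : ∑ m ∈ Finset.Icc 1 (orderOf g), ZMod.stdAddChar (s * ((g : ZMod p)) ^ m)
        = ∑ i ∈ Finset.range (orderOf g), F (g * g ^ i) := by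
      rw [← Finset.Ico_add_one_right_eq_Icc, Finset.sum_Ico_eq_sum_range]
      refine Finset.sum_congr rfl fun i _ => ?_
      show ZMod.stdAddChar (s * ((g : ZMod p)) ^ (1 + i)) = ZMod.stdAddChar (s * ((g * g ^ i : (ZMod p)ˣ) : ZMod p))
      congr 1
      rw [pow_add, pow_one, Units.val_mul, Units.val_pow_eq_pow_val]
    rw [e2, Finset.sum_range (fun i => F (g * g ^ i))]
    have e3 : ∑ i : Fin (orderOf g), F (g * g ^ (i : ℕ))
        = ∑ h : Subgroup.zpowers g, F (g * (h : (ZMod p)ˣ)) := by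
      refine Fintype.sum_equiv (finEquivZPowers hg) _ _ fun i => ?_
      rw [finEquivZPowers_apply]
    rw [e3]
    refine Fintype.sum_equiv (Equiv.mulLeft (⟨g, Subgroup.mem_zpowers g⟩ : Subgroup.zpowers g))
      _ _ fun h => ?_
    rw [Equiv.coe_mulLeft, Submonoid.coe_mul]
  rw [h1]
  exact subgroupSumBound p (Subgroup.zpowers g) s hs

open ArithmeticFunction ArithmeticFunction.Moebius in
private lemma moebiusDecomp (N : ℕ) (hN : N ≠ 0) (f : ℕ → ℂ) :
    ∑ n ∈ (Finset.Icc 1 N).filter (fun n => Nat.gcd n N = 1), f n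
      = ∑ d ∈ N.divisors, (μ d : ℂ) *
          ∑ n ∈ (Finset.Icc 1 N).filter (fun n => d ∣ n), f n := by
  classical
  have hsum : ∀ m : ℕ, (∑ d ∈ m.divisors, (μ d : ℤ)) = if m = 1 then 1 else 0 := by
    intro m
    rw [← ArithmeticFunction.coe_mul_zeta_apply, ArithmeticFunction.moebius_mul_coe_zeta,
      ArithmeticFunction.one_apply]
  calc ∑ n ∈ (Finset.Icc 1 N).filter (fun n => Nat.gcd n N = 1), f n
      = ∑ n ∈ Finset.Icc 1 N, (if Nat.gcd n N = 1 then f n else 0) :=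
        (Finset.sum_filter _ _)
    _ = ∑ n ∈ Finset.Icc 1 N, (∑ d ∈ N.divisors.filter (· ∣ n), (μ d : ℂ)) * f n := by
        refine Finset.sum_congr rfl fun n _ => ?_
        have hdiv : (Nat.gcd n N).divisors = N.divisors.filter (· ∣ n) := by
          ext d
          simp only [Nat.mem_divisors, Finset.mem_filter, Nat.dvd_gcd_iff]
          constructor
          · rintro ⟨⟨h1, h2⟩, _⟩; exact ⟨⟨h2, hN⟩, h1⟩
          · rintro ⟨⟨h1, _⟩, h2⟩; exact ⟨⟨h2, h1⟩, Nat.gcd_ne_zero_right hN⟩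
        rw [← hdiv]
        have hcast : (∑ d ∈ (Nat.gcd n N).divisors, (μ d : ℂ))
            = if Nat.gcd n N = 1 then 1 else 0 := by
          have h := hsum (Nat.gcd n N)
          have h2 : ((∑ d ∈ (Nat.gcd n N).divisors, (μ d : ℤ) : ℤ) : ℂ)
              = ((if Nat.gcd n N = 1 then (1:ℤ) else 0 : ℤ) : ℂ) := by rw [h]
          push_cast at h2
          rw [h2]
        rw [hcast]
        split_ifs <;> simp
    _ = ∑ n ∈ Finset.Icc 1 N, ∑ d ∈ N.divisors, (if d ∣ n then (μ d : ℂ) * f n else 0) := by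
        refine Finset.sum_congr rfl fun n _ => ?_
        rw [Finset.sum_filter, Finset.sum_mul]
        exact Finset.sum_congr rfl fun d _ => by rw [ite_mul, zero_mul]
    _ = ∑ d ∈ N.divisors, ∑ n ∈ Finset.Icc 1 N, (if d ∣ n then (μ d : ℂ) * f n else 0) :=
        Finset.sum_comm
    _ = ∑ d ∈ N.divisors, (μ d : ℂ) * ∑ n ∈ (Finset.Icc 1 N).filter (fun n => d ∣ n), f n := by
        refine Finset.sum_congr rfl fun d _ => ?_
        rw [← Finset.sum_filter, Finset.mul_sum]

private lemma sqfreeDivisorCount (N : ℕ) (hN : N ≠ 0) :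
    ((N.divisors.filter Squarefree).card) ≤ 2 ^ N.primeFactors.card := by
  have h := Finset.card_le_card_of_injOn (s := N.divisors.filter Squarefree)
    (f := Nat.primeFactors) (t := N.primeFactors.powerset) ?_ ?_
  · rwa [Finset.card_powerset] at h
  · intro d hd
    rw [Finset.mem_coe, Finset.mem_powerset]
    rw [Finset.mem_coe, Finset.mem_filter, Nat.mem_divisors] at hd
    exact Nat.primeFactors_mono hd.1.1 hN
  · intro d1 h1 d2 h2 heq
    rw [Finset.coe_filter] at h1 h2
    simp only [Set.mem_setOf_eq, Nat.mem_divisors] at h1 h2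
    rw [← Nat.prod_primeFactors_of_squarefree h1.2, ← Nat.prod_primeFactors_of_squarefree h2.2,
      heq]

private lemma twoPowOmegaBound (ε : ℝ) (hε : 0 < ε) :
    ∃ B : ℕ, 0 < B ∧ ∀ N : ℕ, N ≠ 0 →
      ((2 : ℝ) ^ N.primeFactors.card) ≤ 2 ^ B * (N : ℝ) ^ ε := by
  obtain ⟨B, hB⟩ := exists_nat_gt ((2 : ℝ) ^ (1 / ε))
  have hBpos : 0 < B := by
    by_contra h
    push_neg at h
    interval_cases B
    · simp at hB
      exact absurd hB (not_lt.mpr (Real.rpow_nonneg (by norm_num) _))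
  refine ⟨B, hBpos, fun N hN => ?_⟩
  have h2B : (2 : ℝ) ≤ (B : ℝ) ^ ε := by
    have h1 : ((2 : ℝ) ^ (1 / ε)) ^ ε ≤ (B : ℝ) ^ ε :=
      Real.rpow_le_rpow (Real.rpow_nonneg (by norm_num) _) hB.le hε.le
    have h2 : ((2:ℝ) ^ (1/ε)) ^ ε = 2 := by
      rw [← Real.rpow_mul (by norm_num : (0:ℝ) ≤ 2), one_div, inv_mul_cancel₀ hε.ne',
        Real.rpow_one]
    rwa [h2] at h1
  set P := N.primeFactors with hP
  set S := P.filter (fun q => q < B) with hSdef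
  set L := P.filter (fun q => ¬ q < B) with hLdef
  have hsplit : ((2:ℝ)) ^ P.card = 2 ^ S.card * 2 ^ L.card := by
    rw [← pow_add, Finset.card_filter_add_card_filter_not]
  have hS : ((2:ℝ)) ^ S.card ≤ 2 ^ B := by
    apply pow_le_pow_right₀ (by norm_num)
    calc S.card ≤ (Finset.range B).card := Finset.card_le_card (by
          intro q hq
          rw [Finset.mem_range]
          exact (Finset.mem_filter.mp hq).2)
      _ = B := Finset.card_range B
  have hprodL : (∏ q ∈ L, q) ≤ N := by
    apply Nat.le_of_dvd (Nat.pos_of_ne_zero hN)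
    exact dvd_trans (Finset.prod_dvd_prod_of_subset _ _ _ (Finset.filter_subset _ _))
      (Nat.prod_primeFactors_dvd N)
  have hL : ((2:ℝ)) ^ L.card ≤ (N : ℝ) ^ ε := by
    calc ((2:ℝ)) ^ L.card = ∏ _q ∈ L, (2:ℝ) := by rw [Finset.prod_const]
      _ ≤ ∏ q ∈ L, (q:ℝ) ^ ε := by
          refine Finset.prod_le_prod (fun _ _ => by norm_num) (fun q hq => ?_)
          have hqB : B ≤ q := le_of_not_gt (Finset.mem_filter.mp hq).2
          calc (2:ℝ) ≤ (B:ℝ) ^ ε := h2B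
            _ ≤ (q:ℝ) ^ ε := Real.rpow_le_rpow (by positivity) (by exact_mod_cast hqB) hε.le
      _ = (∏ q ∈ L, (q:ℝ)) ^ ε := Real.finset_prod_rpow _ _ (fun q _ => by positivity) _
      _ = (((∏ q ∈ L, q : ℕ)) : ℝ) ^ ε := by push_cast; ring_nf
      _ ≤ (N : ℝ) ^ ε := Real.rpow_le_rpow (by positivity) (by exact_mod_cast hprodL) hε.le
  calc ((2:ℝ)) ^ P.card = 2 ^ S.card * 2 ^ L.card := hsplit
    _ ≤ 2 ^ B * (N : ℝ) ^ ε := by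
        apply mul_le_mul hS hL (by positivity) (by positivity)

/-- For every `ε > 0` there is `C > 0` such that for every prime `p`, every primitive root
`τ` mod `p`, and every integer `s` with `1 ≤ s ≤ p−1`:
`|∑_{1 ≤ n ≤ p−1, gcd(n,p−1)=1} e(s·τⁿ/p)| ≤ C · p^{1/2+ε} · log p`. -/
theorem exponential_sum_coprime_indices_bound (ε : ℝ) (hε : 0 < ε) :
    ∃ C > (0:ℝ), ∀ p : ℕ, p.Prime →
      ∀ τ : ℤ, orderOf ((τ : ZMod p)) = p - 1 →
      ∀ s : ℤ, 1 ≤ s → s ≤ (p:ℤ) - 1 →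
      ‖(∑ n ∈ (Finset.Icc 1 (p-1)).filter (fun n => Nat.gcd n (p-1) = 1),
          Complex.exp (2 * Real.pi * Complex.I * ((s:ℂ) * (τ:ℂ) ^ n / (p:ℂ))))‖
        ≤ C * (p:ℝ) ^ ((1:ℝ)/2 + ε) * Real.log p := by
  obtain ⟨B, hBpos, hB⟩ := twoPowOmegaBound ε hε
  have hlog2 : (0:ℝ) < Real.log 2 := Real.log_pos (by norm_num)
  refine ⟨(2:ℝ) ^ B / Real.log 2, by positivity, ?_⟩
  intro p hp τ hτ s hs1 hs2
  haveI : Fact p.Prime := ⟨hp⟩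
  have hp2 : 2 ≤ p := hp.two_le
  set N := p - 1 with hNdef
  have hN0 : N ≠ 0 := by omega
  -- τ is a unit
  have hfin : IsOfFinOrder ((τ : ZMod p)) := by
    rw [← orderOf_pos_iff, hτ]; omega
  have hunit : IsUnit ((τ : ZMod p)) :=
    IsUnit.of_pow_eq_one (n := N) (by rw [← hτ]; exact pow_orderOf_eq_one _) hN0
  set gu : (ZMod p)ˣ := hunit.unit with hgu
  have hguv : (gu : ZMod p) = (τ : ZMod p) := hunit.unit_spec
  have hordgu : orderOf gu = N := by
    rw [← orderOf_units, hguv, hτ]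
  -- s is nonzero mod p
  set szm : ZMod p := ((s : ℤ) : ZMod p) with hszm
  have hszm0 : szm ≠ 0 := by
    rw [hszm, Ne, ZMod.intCast_zmod_eq_zero_iff_dvd]
    intro hdvd
    have := Int.le_of_dvd (by omega) hdvd
    omega
  -- convert exponentials to additive characters
  set F : ℕ → ℂ := fun n => ZMod.stdAddChar (szm * ((gu ^ n : (ZMod p)ˣ) : ZMod p)) with hF
  have hconv : ∀ n : ℕ, Complex.exp (2 * Real.pi * Complex.I * ((s:ℂ) * (τ:ℂ) ^ n / (p:ℂ)))
      = F n := by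
    intro n
    have h1 : szm * ((gu ^ n : (ZMod p)ˣ) : ZMod p) = ((s * τ ^ n : ℤ) : ZMod p) := by
      rw [Units.val_pow_eq_pow_val, hguv, hszm]
      push_cast
      ring
    rw [hF]
    simp only
    rw [h1, ZMod.stdAddChar_coe]
    congr 1
    push_cast
    ring
  have hSrw : ∑ n ∈ (Finset.Icc 1 (p-1)).filter (fun n => Nat.gcd n (p-1) = 1),
        Complex.exp (2 * Real.pi * Complex.I * ((s:ℂ) * (τ:ℂ) ^ n / (p:ℂ)))
      = ∑ d ∈ N.divisors, ((ArithmeticFunction.moebius d : ℤ) : ℂ) *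
          ∑ n ∈ (Finset.Icc 1 N).filter (fun n => d ∣ n), F n := by
    rw [← moebiusDecomp N hN0 F]
    exact Finset.sum_congr rfl fun n _ => hconv n
  rw [hSrw]
  -- bound each inner sum
  have hTd : ∀ d ∈ N.divisors, ‖∑ n ∈ (Finset.Icc 1 N).filter (fun n => d ∣ n), F n‖
      ≤ Real.sqrt p := by
    intro d hd
    obtain ⟨hdvd, _⟩ := Nat.mem_divisors.mp hd
    have hd0 : d ≠ 0 := by
      rintro rfl
      exact hN0 (Nat.eq_zero_of_zero_dvd hdvd)
    have hordpow : orderOf (gu ^ d) = N / d := by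
      rw [orderOf_pow_of_dvd hd0 (hordgu ▸ hdvd), hordgu]
    have hreindex : ∑ n ∈ (Finset.Icc 1 N).filter (fun n => d ∣ n), F n
        = ∑ m ∈ Finset.Icc 1 (orderOf (gu ^ d)),
            ZMod.stdAddChar (szm * (((gu ^ d : (ZMod p)ˣ) : ZMod p)) ^ m) := by
      rw [hordpow]
      refine Finset.sum_nbij' (fun n => n / d) (fun m => d * m) ?_ ?_ ?_ ?_ ?_
      · intro n hn
        rw [Finset.mem_filter, Finset.mem_Icc] at hn
        obtain ⟨⟨h1, h2⟩, h3⟩ := hn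
        rw [Finset.mem_Icc]
        constructor
        · exact Nat.one_le_div_iff (Nat.pos_of_ne_zero hd0) |>.mpr (Nat.le_of_dvd (by omega) h3)
        · exact Nat.div_le_div_right h2
      · intro m hm
        rw [Finset.mem_Icc] at hm
        rw [Finset.mem_filter, Finset.mem_Icc]
        refine ⟨⟨by nlinarith [Nat.pos_of_ne_zero hd0], ?_⟩, Dvd.intro m rfl⟩
        calc d * m ≤ d * (N / d) := Nat.mul_le_mul_left d hm.2
          _ ≤ N := Nat.mul_div_le N d
      · intro n hn
        rw [Finset.mem_filter] at hn
        exact Nat.mul_div_cancel' hn.2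
      · intro m hm
        exact Nat.mul_div_cancel_left m (Nat.pos_of_ne_zero hd0)
      · intro n hn
        rw [Finset.mem_filter] at hn
        obtain ⟨c, rfl⟩ := hn.2
        rw [hF]
        simp only
        congr 2
        rw [Nat.mul_div_cancel_left c (Nat.pos_of_ne_zero hd0), pow_mul,
          Units.val_pow_eq_pow_val]
    rw [hreindex]
    exact iccSumBound p (gu ^ d) szm hszm0
  -- sum the bounds
  have habs : ‖∑ d ∈ N.divisors, ((ArithmeticFunction.moebius d : ℤ) : ℂ) *
        ∑ n ∈ (Finset.Icc 1 N).filter (fun n => d ∣ n), F n‖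
      ≤ ((N.divisors.filter Squarefree).card : ℝ) * Real.sqrt p := by
    calc ‖∑ d ∈ N.divisors, ((ArithmeticFunction.moebius d : ℤ) : ℂ) *
          ∑ n ∈ (Finset.Icc 1 N).filter (fun n => d ∣ n), F n‖
        ≤ ∑ d ∈ N.divisors, ‖((ArithmeticFunction.moebius d : ℤ) : ℂ) *
            ∑ n ∈ (Finset.Icc 1 N).filter (fun n => d ∣ n), F n‖ :=
          norm_sum_le _ _
      _ ≤ ∑ d ∈ N.divisors, (if Squarefree d then Real.sqrt p else 0) := by
          refine Finset.sum_le_sum fun d hd => ?_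
          rw [norm_mul]
          by_cases hsq : Squarefree d
          · rw [if_pos hsq]
            have h1 : ‖((ArithmeticFunction.moebius d : ℤ) : ℂ)‖ = 1 := by
              rw [Complex.norm_intCast]
              exact_mod_cast ArithmeticFunction.abs_moebius_eq_one_of_squarefree hsq
            rw [h1, one_mul]
            exact hTd d hd
          · rw [if_neg hsq]
            have : (ArithmeticFunction.moebius d : ℤ) = 0 := by
              by_contra h
              exact hsq (ArithmeticFunction.moebius_ne_zero_iff_squarefree.mp h)
            rw [this]
            simp
      _ = ((N.divisors.filter Squarefree).card : ℝ) * Real.sqrt p := by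
          rw [← Finset.sum_filter, Finset.sum_const, nsmul_eq_mul]
  -- now the purely real estimates
  have hp0 : (0:ℝ) < (p:ℝ) := by positivity
  have hcard : ((N.divisors.filter Squarefree).card : ℝ) ≤ (2:ℝ) ^ N.primeFactors.card := by
    exact_mod_cast sqfreeDivisorCount N hN0
  have homega : ((2:ℝ)) ^ N.primeFactors.card ≤ 2 ^ B * (N : ℝ) ^ ε := hB N hN0
  have hNle : (N : ℝ) ^ ε ≤ (p : ℝ) ^ ε := by
    apply Real.rpow_le_rpow (by positivity) _ hε.le
    exact_mod_cast Nat.sub_le p 1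
  have hsqrt : Real.sqrt p = (p : ℝ) ^ ((1:ℝ)/2) := Real.sqrt_eq_rpow _
  have hsqrt_nonneg : (0:ℝ) ≤ Real.sqrt p := Real.sqrt_nonneg _
  have hmain : ((N.divisors.filter Squarefree).card : ℝ) * Real.sqrt p
      ≤ (2:ℝ) ^ B * (p : ℝ) ^ ((1:ℝ)/2 + ε) := by
    calc ((N.divisors.filter Squarefree).card : ℝ) * Real.sqrt p
        ≤ ((2:ℝ) ^ B * (N : ℝ) ^ ε) * Real.sqrt p := by
          apply mul_le_mul_of_nonneg_right (le_trans hcard homega) hsqrt_nonneg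
      _ ≤ ((2:ℝ) ^ B * (p : ℝ) ^ ε) * Real.sqrt p := by
          apply mul_le_mul_of_nonneg_right _ hsqrt_nonneg
          apply mul_le_mul_of_nonneg_left hNle (by positivity)
      _ = (2:ℝ) ^ B * (p : ℝ) ^ ((1:ℝ)/2 + ε) := by
          rw [hsqrt, mul_assoc, ← Real.rpow_add hp0]
          ring_nf
  have hlogp : Real.log 2 ≤ Real.log p := by
    apply Real.log_le_log (by norm_num)
    exact_mod_cast hp2
  calc ‖∑ d ∈ N.divisors, ((ArithmeticFunction.moebius d : ℤ) : ℂ) *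
        ∑ n ∈ (Finset.Icc 1 N).filter (fun n => d ∣ n), F n‖
      ≤ ((N.divisors.filter Squarefree).card : ℝ) * Real.sqrt p := habs
    _ ≤ (2:ℝ) ^ B * (p : ℝ) ^ ((1:ℝ)/2 + ε) := hmain
    _ = ((2:ℝ) ^ B / Real.log 2) * (p : ℝ) ^ ((1:ℝ)/2 + ε) * Real.log 2 := by
        field_simp
    _ ≤ ((2:ℝ) ^ B / Real.log 2) * (p : ℝ) ^ ((1:ℝ)/2 + ε) * Real.log p := by
        apply mul_le_mul_of_nonneg_left hlogp (by positivity)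
end

section
/- Fix ε ∈ (0, 1/16) and a nonzero integer u. For each prime p with p ∤ u and each primitive root τ_p mod p, define U_p = (1/p)·∑_{k=1}^{p−1} e(−u·k/p) and V_p = ∑_{1 ≤ n ≤ p−1, gcd(n,p−1)=1} e(τ_pⁿ/p). Then there exist constants C > 0 and x₀ ≥ 2 such that for all x ≥ x₀ and every choice of a primitive root τ_p mod p for each prime p ∈ [x, 2x] with p ∤ u, one has ∑_{x ≤ p ≤ 2x, p prime, p ∤ u} |U_p·V_p| ≤ C · x^{1−ε}/log x. -/
open Finset Complex

namespace HPE
variable {p : ℕ} [hp : Fact p.Prime]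

noncomputable def ψ (p : ℕ) [NeZero p] : AddChar (ZMod p) ℂ := ZMod.stdAddChar

lemma norm_ψ [NeZero p] (z : ZMod p) : ‖ψ p z‖ = 1 := by
  rw [ψ, ZMod.stdAddChar_apply, Circle.norm_coe]

lemma ψ_int [NeZero p] (a : ℤ) :
    Complex.exp (2 * Real.pi * Complex.I * ((a : ℂ) / (p:ℂ))) = ψ p (a : ZMod p) := by
  rw [ψ, ZMod.stdAddChar_coe, mul_div_assoc]

lemma conj_ψ [NeZero p] (z : ZMod p) : (starRingEnd ℂ) (ψ p z) = ψ p (-z) := by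
  have h1 : ψ p z * ψ p (-z) = 1 := by
    rw [← AddChar.map_add_eq_mul, add_neg_cancel, AddChar.map_zero_eq_one]
  have h2 : ψ p z * (starRingEnd ℂ) (ψ p z) = 1 := by
    rw [Complex.mul_conj]
    norm_cast
    have := norm_ψ (p := p) z
    simp [Complex.normSq_eq_norm_sq, this]
  have hne : ψ p z ≠ 0 := by
    intro h
    have := norm_ψ (p := p) z
    rw [h] at this; simp at this
  exact mul_left_cancel₀ hne (h2.trans h1.symm)

lemma sum_ψ_mul (b : ZMod p) :
    ∑ x : ZMod p, ψ p (x * b) = if b = 0 then (p : ℂ) else 0 := by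
  have := AddChar.sum_mulShift (ψ := ψ p) b (ZMod.isPrimitive_stdAddChar p)
  rw [ZMod.card p] at this
  rw [this]; split <;> simp

/-- The key subgroup exponential sum bound: for a unit `x` of order `N`,
`|∑_{m<N} ψ(x^m)| ≤ √p`. -/
lemma subgroup_sum_bound (x : (ZMod p)ˣ) :
    ‖∑ m ∈ range (orderOf x), ψ p ((x : ZMod p) ^ m)‖ ≤ Real.sqrt p := by
  set N := orderOf x with hN
  have hN0 : 0 < N := orderOf_pos x
  have hxN : (x : ZMod p) ^ N = 1 := by
    rw [← Units.val_pow_eq_pow_val, hN, pow_orderOf_eq_one, Units.val_one]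
  set S : ZMod p → ℂ := fun a => ∑ m ∈ range N, ψ p (a * (x : ZMod p) ^ m) with hS
  -- orthogonality identity
  have key : ∑ a : ZMod p, Complex.normSq (S a) = (p : ℝ) * N := by
    have keyC : ∑ a : ZMod p, (S a * (starRingEnd ℂ) (S a)) = (p : ℂ) * N := by
      have expand : ∀ a : ZMod p, S a * (starRingEnd ℂ) (S a)
          = ∑ m ∈ range N, ∑ m' ∈ range N, ψ p (a * ((x:ZMod p)^m - (x:ZMod p)^m')) := by
        intro a
        rw [hS]
        simp only [map_sum, Finset.sum_mul_sum, conj_ψ]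
        refine Finset.sum_congr rfl fun m _ => Finset.sum_congr rfl fun m' _ => ?_
        rw [← AddChar.map_add_eq_mul]
        ring_nf
      calc ∑ a : ZMod p, (S a * (starRingEnd ℂ) (S a))
          = ∑ a : ZMod p, ∑ m ∈ range N, ∑ m' ∈ range N,
              ψ p (a * ((x:ZMod p)^m - (x:ZMod p)^m')) := by
            exact Finset.sum_congr rfl fun a _ => expand a
        _ = ∑ m ∈ range N, ∑ m' ∈ range N, ∑ a : ZMod p,
              ψ p (a * ((x:ZMod p)^m - (x:ZMod p)^m')) := by
            rw [Finset.sum_comm]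
            exact Finset.sum_congr rfl fun m _ => Finset.sum_comm
        _ = ∑ m ∈ range N, ∑ m' ∈ range N,
              (if (x:ZMod p)^m = (x:ZMod p)^m' then (p:ℂ) else 0) := by
            refine Finset.sum_congr rfl fun m _ => Finset.sum_congr rfl fun m' _ => ?_
            rw [sum_ψ_mul]
            congr 1
            simp [sub_eq_zero]
        _ = ∑ m ∈ range N, (p : ℂ) := by
            refine Finset.sum_congr rfl fun m hm => ?_
            have : ∀ m' ∈ range N, ((x:ZMod p)^m = (x:ZMod p)^m') ↔ m' = m := by
              intro m' hm'
              simp only [mem_range] at hm hm'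
              constructor
              · intro h
                have hpow : x ^ m = x ^ m' := Units.ext (by push_cast; exact h)
                exact (pow_injOn_Iio_orderOf (by simpa [hN] using hm') (by simpa [hN] using hm) hpow.symm)
              · rintro rfl; rfl
            rw [Finset.sum_congr rfl fun m' hm' => by rw [if_congr (this m' hm') rfl rfl]]
            rw [Finset.sum_ite_eq' (range N) m (fun _ => (p:ℂ))]
            simp [mem_range.mpr (mem_range.mp hm)]
        _ = (p : ℂ) * N := by simp [mul_comm]
    have := congrArg Complex.re keyC
    simpa [Complex.mul_conj, Complex.re_sum] using this
  -- shift invariance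
  have shift : ∀ a : ZMod p, S (a * x) = S a := by
    intro a
    have h1 : S (a * x) = ∑ m ∈ range N, ψ p (a * (x:ZMod p)^(m+1)) := by
      rw [hS]
      refine Finset.sum_congr rfl fun m _ => ?_
      rw [pow_succ]
      ring_nf
    have h2 : ∑ m ∈ range N, ψ p (a * (x:ZMod p)^(m+1))
        = ∑ m ∈ Ico 1 (N+1), ψ p (a * (x:ZMod p)^m) := by
      rw [Finset.sum_Ico_eq_sum_range]
      simp [add_comm 1]
    have h3 : Finset.Ico 1 (N+1) = insert N (Finset.Ico 1 N) := by
      rw [Finset.Ico_add_one_right_eq_Icc, ← Finset.Ico_insert_right hN0]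
    have h4 : Finset.range N = insert 0 (Finset.Ico 1 N) := by
      rw [Finset.range_eq_Ico, ← Finset.Ioo_insert_left hN0, ← Finset.Ico_add_one_left_eq_Ioo 0 N, zero_add]
    rw [h1, h2, h3, Finset.sum_insert (by simp), hS]
    simp only []
    rw [h4, Finset.sum_insert (by simp)]
    simp [hxN]
  have shift_pow : ∀ j : ℕ, S ((x:ZMod p)^j) = S 1 := by
    intro j
    induction j with
    | zero => simp
    | succ j ih => rw [pow_succ, shift, ih]
  -- conclude
  have hinj : ∀ j1 ∈ range N, ∀ j2 ∈ range N,
      (x:ZMod p)^j1 = (x:ZMod p)^j2 → j1 = j2 := by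
    intro j1 h1 j2 h2 h
    have hpow : x ^ j1 = x ^ j2 := Units.ext (by push_cast; exact h)
    exact pow_injOn_Iio_orderOf (by simpa [hN] using mem_range.mp h1)
      (by simpa [hN] using mem_range.mp h2) hpow
  have himg : ∑ a ∈ (range N).image (fun j => (x:ZMod p)^j), Complex.normSq (S a)
      = (N : ℝ) * Complex.normSq (S 1) := by
    rw [Finset.sum_image hinj]
    simp [shift_pow, Finset.sum_const, nsmul_eq_mul, mem_range]
  have hle : (N : ℝ) * Complex.normSq (S 1) ≤ (p:ℝ) * N := by
    rw [← himg, ← key]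
    exact Finset.sum_le_sum_of_subset_of_nonneg (Finset.subset_univ _)
      (fun a _ _ => Complex.normSq_nonneg _)
  have hS1 : Complex.normSq (S 1) ≤ (p : ℝ) := by
    have hNpos : (0:ℝ) < N := by exact_mod_cast hN0
    nlinarith [hle]
  have hgoal : (∑ m ∈ range N, ψ p ((x : ZMod p) ^ m)) = S 1 := by
    rw [hS]
    exact Finset.sum_congr rfl fun m _ => by rw [one_mul]
  rw [hgoal, ← Real.sqrt_sq (norm_nonneg _), ← Complex.normSq_eq_norm_sq]
  exact Real.sqrt_le_sqrt hS1

lemma sum_Icc_pow_eq_sum_range (y : (ZMod p)ˣ) :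
    ∑ k ∈ Finset.Icc 1 (orderOf y), ψ p ((y : ZMod p) ^ k)
      = ∑ k ∈ range (orderOf y), ψ p ((y : ZMod p) ^ k) := by
  set N := orderOf y with hN
  have hN0 : 0 < N := orderOf_pos y
  have hyN : (y : ZMod p) ^ N = 1 := by
    rw [← Units.val_pow_eq_pow_val, hN, pow_orderOf_eq_one, Units.val_one]
  have h3 : Finset.Icc 1 N = insert N (Finset.Ico 1 N) :=
    (Finset.Ico_insert_right hN0).symm
  have h4 : Finset.range N = insert 0 (Finset.Ico 1 N) := by
    rw [Finset.range_eq_Ico, ← Finset.Ioo_insert_left hN0, ← Finset.Ico_add_one_left_eq_Ioo 0 N, zero_add]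
  rw [h3, h4, Finset.sum_insert (by simp), Finset.sum_insert (by simp), hyN]
  simp

lemma squarefree_divisor_count (m : ℕ) :
    ((m.divisors.filter Squarefree).card : ℝ) ≤ 2 ^ m.primeFactors.card := by
  have hcard : (m.divisors.filter Squarefree).card ≤ m.primeFactors.powerset.card := by
    apply Finset.card_le_card_of_injOn (fun d => d.primeFactors)
    · intro d hd
      simp only [Finset.mem_coe, Finset.mem_filter, Nat.mem_divisors] at hd
      exact Finset.mem_powerset.mpr (Nat.primeFactors_mono hd.1.1 hd.1.2)
    · intro d1 h1 d2 h2 h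
      simp only [Finset.coe_filter, Set.mem_setOf_eq, Nat.mem_divisors] at h1 h2
      have h' : d1.primeFactors = d2.primeFactors := h
      rw [← Nat.prod_primeFactors_of_squarefree h1.2, ← Nat.prod_primeFactors_of_squarefree h2.2, h']
  rw [Finset.card_powerset] at hcard
  calc ((m.divisors.filter Squarefree).card : ℝ) ≤ (2 ^ m.primeFactors.card : ℕ) := by
        exact_mod_cast hcard
    _ = 2 ^ m.primeFactors.card := by push_cast; ring

lemma V_bound (τ : ℤ) (hτ : orderOf ((τ : ZMod p)) = p - 1) :
    ‖∑ n ∈ (Finset.Icc 1 (p-1)).filter (fun n => Nat.gcd n (p-1) = 1),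
        Complex.exp (2 * Real.pi * Complex.I * ((τ : ℂ) ^ n / (p:ℂ)))‖
      ≤ (2:ℝ) ^ ((p-1).primeFactors.card) * Real.sqrt p := by
  have hp2 : 2 ≤ p := hp.out.two_le
  set m := p - 1 with hm'
  have hm : m ≠ 0 := by omega
  -- the unit
  have hpow1 : (τ : ZMod p) ^ m = 1 := by rw [← hτ]; exact pow_orderOf_eq_one _
  have hiu : IsUnit ((τ : ZMod p)) := IsUnit.of_pow_eq_one hpow1 hm
  set x : (ZMod p)ˣ := hiu.unit with hxdef
  have hx : (x : ZMod p) = (τ : ZMod p) := hiu.unit_spec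
  have hox : orderOf x = m := by
    rw [← orderOf_units, hx, hτ]
  -- rewrite the summand
  have hterm : ∀ n : ℕ, Complex.exp (2 * Real.pi * Complex.I * ((τ : ℂ) ^ n / (p:ℂ)))
      = ψ p ((x : ZMod p) ^ n) := by
    intro n
    have h1 : ((τ^n : ℤ) : ℂ) = (τ : ℂ) ^ n := by push_cast; ring
    rw [← h1, ψ_int]
    congr 1
    rw [hx]
    push_cast
    ring
  simp only [hterm]
  -- Möbius inversion of the coprimality condition
  have hmoeb : ∀ n : ℕ, (if Nat.gcd n m = 1 then (1:ℂ) else 0)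
      = ∑ d ∈ m.divisors.filter (· ∣ n), ((ArithmeticFunction.moebius d : ℤ) : ℂ) := by
    intro n
    have hdiveq : (Nat.gcd n m).divisors = m.divisors.filter (· ∣ n) := by
      ext d
      simp only [Nat.mem_divisors, Finset.mem_filter, Nat.dvd_gcd_iff]
      constructor
      · rintro ⟨⟨h1, h2⟩, -⟩; exact ⟨⟨h2, hm⟩, h1⟩
      · rintro ⟨⟨h2, -⟩, h1⟩
        exact ⟨⟨h1, h2⟩, Nat.gcd_ne_zero_right hm⟩
    have := ArithmeticFunction.moebius_mul_coe_zeta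
    have happ := congrArg (fun f => f (Nat.gcd n m)) this
    simp only [ArithmeticFunction.coe_mul_zeta_apply, ArithmeticFunction.one_apply] at happ
    rw [hdiveq] at happ
    calc (if Nat.gcd n m = 1 then (1:ℂ) else 0)
        = ((if Nat.gcd n m = 1 then (1:ℤ) else 0 : ℤ) : ℂ) := by split <;> simp
      _ = _ := by rw [← happ]; push_cast; rfl
  rw [Finset.sum_filter]
  have : ∀ n ∈ Finset.Icc 1 m, (if Nat.gcd n m = 1 then ψ p ((x : ZMod p) ^ n) else 0)
      = ∑ d ∈ m.divisors.filter (· ∣ n), ((ArithmeticFunction.moebius d : ℤ) : ℂ) * ψ p ((x : ZMod p) ^ n) := by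
    intro n _
    rw [← Finset.sum_mul, ← hmoeb n]
    split <;> simp
  rw [Finset.sum_congr rfl this]
  rw [Finset.sum_comm' (t' := m.divisors) (s' := fun d => (Finset.Icc 1 m).filter (d ∣ ·))
    (by intro n d; simp only [Finset.mem_filter]; tauto)]
  -- inner sums
  have hinner : ∀ d ∈ m.divisors,
      ∑ n ∈ (Finset.Icc 1 m).filter (d ∣ ·), ψ p ((x : ZMod p) ^ n)
        = ∑ k ∈ range (orderOf (x ^ d)), ψ p (((x ^ d : (ZMod p)ˣ) : ZMod p) ^ k) := by
    intro d hd
    obtain ⟨hdvd, -⟩ := Nat.mem_divisors.mp hd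
    have hd0 : d ≠ 0 := by rintro rfl; exact hm (Nat.eq_zero_of_zero_dvd hdvd)
    have hord : orderOf (x ^ d) = m / d := by
      rw [orderOf_pow_of_dvd hd0 (by rw [hox]; exact hdvd), hox]
    have himage : (Finset.Icc 1 m).filter (d ∣ ·) = (Finset.Icc 1 (m/d)).image (d * ·) := by
      ext n
      simp only [Finset.mem_filter, Finset.mem_Icc, Finset.mem_image]
      have hdpos : 0 < d := Nat.pos_of_ne_zero hd0
      constructor
      · rintro ⟨⟨h1, h2⟩, k, rfl⟩
        have hk0 : 0 < k := Nat.pos_of_ne_zero (by rintro rfl; simp at h1)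
        refine ⟨k, ⟨hk0, ?_⟩, rfl⟩
        rw [Nat.le_div_iff_mul_le hdpos, Nat.mul_comm]
        exact h2
      · rintro ⟨k, ⟨hk1, hk2⟩, rfl⟩
        refine ⟨⟨Nat.one_le_iff_ne_zero.mpr (Nat.mul_ne_zero hd0 (by omega)), ?_⟩, ⟨k, rfl⟩⟩
        calc d * k ≤ d * (m/d) := Nat.mul_le_mul_left d hk2
          _ ≤ m := by rw [Nat.mul_comm]; exact Nat.div_mul_le_self m d
    rw [himage, Finset.sum_image (by intro a _ b _ h; exact Nat.eq_of_mul_eq_mul_left (Nat.pos_of_ne_zero hd0) h)]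
    rw [← sum_Icc_pow_eq_sum_range (y := x ^ d), hord]
    refine Finset.sum_congr rfl fun k hk => ?_
    congr 1
    push_cast
    rw [pow_mul]
  -- put it together
  calc ‖∑ d ∈ m.divisors, ∑ n ∈ (Finset.Icc 1 m).filter (d ∣ ·),
          ((ArithmeticFunction.moebius d : ℤ) : ℂ) * ψ p ((x : ZMod p) ^ n)‖
      ≤ ∑ d ∈ m.divisors, ‖∑ n ∈ (Finset.Icc 1 m).filter (d ∣ ·),
          ((ArithmeticFunction.moebius d : ℤ) : ℂ) * ψ p ((x : ZMod p) ^ n)‖ :=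
        norm_sum_le _ _
    _ ≤ ∑ d ∈ m.divisors, (if Squarefree d then (1:ℝ) else 0) * Real.sqrt p := by
        refine Finset.sum_le_sum fun d hd => ?_
        rw [← Finset.mul_sum, norm_mul, hinner d hd]
        have h1 : ‖((ArithmeticFunction.moebius d : ℤ) : ℂ)‖ = if Squarefree d then (1:ℝ) else 0 := by
          rw [Complex.norm_intCast, ← Int.cast_abs, ArithmeticFunction.abs_moebius]
          split <;> simp
        rw [h1]
        split
        · rw [one_mul, one_mul]; exact subgroup_sum_bound _
        · simp
    _ = ((m.divisors.filter Squarefree).card : ℝ) * Real.sqrt p := by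
        rw [← Finset.sum_mul, Finset.sum_boole]
    _ ≤ (2:ℝ) ^ ((p-1).primeFactors.card) * Real.sqrt p := by
        refine mul_le_mul_of_nonneg_right ?_ (Real.sqrt_nonneg _)
        exact squarefree_divisor_count m

lemma U_sum (u : ℤ) (hu : ¬ (p:ℤ) ∣ u) :
    ∑ k ∈ Finset.Icc 1 (p-1),
      Complex.exp (2 * Real.pi * Complex.I * (-(u:ℂ) * (k:ℂ) / (p:ℂ))) = -1 := by
  have hp2 : 2 ≤ p := hp.out.two_le
  set c : ZMod p := ((-u : ℤ) : ZMod p) with hc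
  have hc0 : c ≠ 0 := by
    rw [hc, Ne, ZMod.intCast_zmod_eq_zero_iff_dvd, dvd_neg]
    exact hu
  have hterm : ∀ k : ℕ, Complex.exp (2 * Real.pi * Complex.I * (-(u:ℂ) * (k:ℂ) / (p:ℂ)))
      = ψ p ((k : ZMod p) * c) := by
    intro k
    have h1 : (-(u:ℂ) * (k:ℂ)) = ((-u * k : ℤ) : ℂ) := by push_cast; ring
    rw [h1, ψ_int]
    congr 1
    rw [hc]
    push_cast
    ring
  have hzero : ∑ k ∈ Finset.range p, ψ p ((k : ZMod p) * c) = 0 := by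
    have hbij : ∑ k ∈ Finset.range p, ψ p ((k : ZMod p) * c)
        = ∑ z : ZMod p, ψ p (z * c) := by
      refine Finset.sum_nbij' (fun k => (k : ZMod p)) (fun z => z.val) ?_ ?_ ?_ ?_ ?_
      · intro a _; exact Finset.mem_univ _
      · intro z _; exact Finset.mem_range.mpr (ZMod.val_lt z)
      · intro a ha; exact ZMod.val_cast_of_lt (Finset.mem_range.mp ha)
      · intro z _; exact ZMod.natCast_rightInverse z
      · intro a _; rfl
    rw [hbij, sum_ψ_mul, if_neg hc0]
  have hsplit : Finset.range p = insert 0 (Finset.Icc 1 (p-1)) := by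
    have : Finset.Icc 1 (p-1) = Finset.Ico 1 p := by
      rw [← Finset.Ico_add_one_right_eq_Icc]
      congr 1
      omega
    rw [this, Finset.range_eq_Ico, ← Finset.Ioo_insert_left (by omega : 0 < p), ← Finset.Ico_add_one_left_eq_Ioo 0 p, zero_add]
  rw [hsplit, Finset.sum_insert (by simp)] at hzero
  simp only [Nat.cast_zero, zero_mul, AddChar.map_zero_eq_one] at hzero
  have := hzero
  calc ∑ k ∈ Finset.Icc 1 (p-1),
        Complex.exp (2 * Real.pi * Complex.I * (-(u:ℂ) * (k:ℂ) / (p:ℂ)))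
      = ∑ k ∈ Finset.Icc 1 (p-1), ψ p ((k : ZMod p) * c) :=
        Finset.sum_congr rfl fun k _ => hterm k
    _ = -1 := by linear_combination this

lemma two_pow_omega_le (m : ℕ) (hm : m ≠ 0) :
    (2:ℝ) ^ m.primeFactors.card ≤ 8 * (m:ℝ) ^ ((2:ℝ)/5) := by
  set k := m.primeFactors.card with hk
  set Q := m.primeFactors.filter (fun q => 7 ≤ q) with hQ
  have hsub : m.primeFactors \ Q ⊆ ({2,3,5} : Finset ℕ) := by
    intro q hq
    rw [Finset.mem_sdiff] at hq
    obtain ⟨hqm, hqQ⟩ := hq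
    have hq1 : q.Prime := Nat.prime_of_mem_primeFactors hqm
    have h7 : q < 7 := by
      by_contra h
      exact hqQ (Finset.mem_filter.mpr ⟨hqm, by omega⟩)
    have h2 : 2 ≤ q := hq1.two_le
    interval_cases q <;> first
      | decide
      | (exfalso; norm_num at hq1)
  have hQcard : k ≤ Q.card + 3 := by
    have h1 : m.primeFactors.card ≤ (Q ∪ (m.primeFactors \ Q)).card := by
      apply Finset.card_le_card
      intro q hq
      rw [Finset.mem_union, Finset.mem_sdiff]
      by_cases hmem : q ∈ Q
      · exact Or.inl hmem
      · exact Or.inr ⟨hq, hmem⟩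
    have h2 : (m.primeFactors \ Q).card ≤ 3 := by
      have := Finset.card_le_card hsub
      simpa using this
    have h3 := Finset.card_union_le Q (m.primeFactors \ Q)
    omega
  have hQprod : (7:ℕ) ^ Q.card ≤ m := by
    calc (7:ℕ) ^ Q.card ≤ ∏ q ∈ Q, q := by
          apply Finset.pow_card_le_prod
          intro q hq
          exact (Finset.mem_filter.mp hq).2
      _ ≤ m := Nat.le_of_dvd (Nat.pos_of_ne_zero hm) <| by
          exact dvd_trans (Finset.prod_dvd_prod_of_subset _ _ _ (Finset.filter_subset _ _))
            (Nat.prod_primeFactors_dvd m)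
  have h2le : (2:ℝ) ≤ (7:ℝ) ^ ((2:ℝ)/5) := by
    have h49 : ((7:ℝ) ^ ((2:ℝ)/5)) ^ (5:ℕ) = 49 := by
      rw [← Real.rpow_natCast ((7:ℝ) ^ ((2:ℝ)/5)) 5, ← Real.rpow_mul (by norm_num)]
      norm_num
    by_contra h
    push_neg at h
    have h0 : (0:ℝ) ≤ (7:ℝ) ^ ((2:ℝ)/5) := Real.rpow_nonneg (by norm_num) _
    have h5 : ((7:ℝ) ^ ((2:ℝ)/5)) ^ (5:ℕ) < 2 ^ (5:ℕ) := pow_lt_pow_left₀ h h0 (by norm_num)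
    rw [h49] at h5
    norm_num at h5
  have hmain : (2:ℝ) ^ Q.card ≤ (m:ℝ) ^ ((2:ℝ)/5) := by
    calc (2:ℝ) ^ Q.card ≤ ((7:ℝ) ^ ((2:ℝ)/5)) ^ Q.card :=
          pow_le_pow_left₀ (by norm_num) h2le _
      _ = ((7:ℝ) ^ (Q.card : ℕ)) ^ ((2:ℝ)/5) := by
          rw [← Real.rpow_natCast ((7:ℝ) ^ ((2:ℝ)/5)) Q.card, ← Real.rpow_mul (by norm_num),
            mul_comm, Real.rpow_mul (by norm_num), Real.rpow_natCast]
      _ ≤ (m:ℝ) ^ ((2:ℝ)/5) := by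
          apply Real.rpow_le_rpow (by positivity) _ (by norm_num)
          exact_mod_cast hQprod
  calc (2:ℝ) ^ k ≤ (2:ℝ) ^ (Q.card + 3) := by
        apply pow_le_pow_right₀ (by norm_num) hQcard
    _ = 8 * (2:ℝ) ^ Q.card := by ring
    _ ≤ 8 * (m:ℝ) ^ ((2:ℝ)/5) := by linarith

lemma term_bound (u τ : ℤ) (hu : ¬ (p:ℤ) ∣ u) (hτ : orderOf ((τ : ZMod p)) = p - 1) :
    norm
      (((1 / (p:ℂ)) * ∑ k ∈ Finset.Icc 1 (p-1),
          Complex.exp (2 * Real.pi * Complex.I * (-(u:ℂ) * (k:ℂ) / (p:ℂ)))) *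
        (∑ n ∈ (Finset.Icc 1 (p-1)).filter (fun n => Nat.gcd n (p-1) = 1),
          Complex.exp (2 * Real.pi * Complex.I * ((τ : ℂ) ^ n / (p:ℂ)))))
      ≤ 8 * (p:ℝ) ^ (-(1:ℝ)/10) := by
  have hp2 : 2 ≤ p := hp.out.two_le
  have hppos : (0:ℝ) < (p:ℝ) := by exact_mod_cast Nat.pos_of_ne_zero (by omega)
  rw [norm_mul, norm_mul, U_sum u hu]
  have h1 : ‖(1/(p:ℂ))‖ = 1/(p:ℝ) := by
    rw [norm_div, norm_one, Complex.norm_natCast]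
  have h2 : ‖(-1 : ℂ)‖ = 1 := by simp
  rw [h1, h2, mul_one]
  have hV := V_bound τ hτ
  have hωle : (2:ℝ) ^ ((p-1).primeFactors.card) ≤ 8 * (p:ℝ) ^ ((2:ℝ)/5) := by
    refine le_trans (two_pow_omega_le (p-1) (by omega)) ?_
    have hle : ((p-1 : ℕ):ℝ) ≤ (p:ℝ) := by exact_mod_cast Nat.sub_le p 1
    have := Real.rpow_le_rpow (by positivity) hle (by norm_num : (0:ℝ) ≤ 2/5)
    linarith
  have hsqrt : Real.sqrt (p:ℝ) = (p:ℝ) ^ ((1:ℝ)/2) := Real.sqrt_eq_rpow _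
  calc (1/(p:ℝ)) * ‖_‖
      ≤ (1/(p:ℝ)) * ((8 * (p:ℝ) ^ ((2:ℝ)/5)) * Real.sqrt (p:ℝ)) := by
        apply mul_le_mul_of_nonneg_left _ (by positivity)
        refine le_trans hV ?_
        exact mul_le_mul_of_nonneg_right hωle (Real.sqrt_nonneg _)
    _ = 8 * ((p:ℝ) ^ (-(1:ℝ)) * ((p:ℝ) ^ ((2:ℝ)/5) * (p:ℝ) ^ ((1:ℝ)/2))) := by
        rw [hsqrt, Real.rpow_neg_one]
        field_simp
    _ = 8 * (p:ℝ) ^ (-(1:ℝ)/10) := by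
        rw [← Real.rpow_add hppos, ← Real.rpow_add hppos]
        norm_num

end HPE



/-- Fix `ε ∈ (0,1/16)` and `u ≠ 0`. With `U_p = (1/p)∑_{k=1}^{p−1} e(−uk/p)` and
`V_p = ∑_{gcd(n,p−1)=1} e(τ_pⁿ/p)`, there are `C > 0` and `x₀ ≥ 2` such that for all
`x ≥ x₀` and any choice of primitive roots `τ_p` mod `p` for primes `p ∈ [x,2x]`, `p ∤ u`:
`∑_{x ≤ p ≤ 2x, p ∤ u} |U_p·V_p| ≤ C·x^{1−ε}/log x`. -/
theorem holder_product_estimate (ε : ℝ) (hε : 0 < ε) (hε' : ε < 1/16) (u : ℤ) (hu : u ≠ 0) :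
    ∃ C > (0:ℝ), ∃ x₀ : ℝ, x₀ ≥ 2 ∧ ∀ x : ℝ, x ≥ x₀ →
      ∀ τ : ℕ → ℤ,
      (∀ p : ℕ, p.Prime → x ≤ (p:ℝ) → (p:ℝ) ≤ 2*x → ¬ (p:ℤ) ∣ u →
          orderOf ((τ p : ZMod p)) = p - 1) →
      ∑ p ∈ (Finset.Icc ⌈x⌉₊ ⌊2*x⌋₊).filter (fun p : ℕ => p.Prime ∧ ¬ ((p:ℤ) ∣ u)),
          norm
            (((1 / (p:ℂ)) * ∑ k ∈ Finset.Icc 1 (p-1),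
                Complex.exp (2 * Real.pi * Complex.I * (-(u:ℂ) * (k:ℂ) / (p:ℂ)))) *
              (∑ n ∈ (Finset.Icc 1 (p-1)).filter (fun n => Nat.gcd n (p-1) = 1),
                Complex.exp (2 * Real.pi * Complex.I * ((τ p : ℂ) ^ n / (p:ℂ)))))
        ≤ C * x ^ (1 - ε) / Real.log x := by
  refine ⟨640, by norm_num, 2, le_refl 2, ?_⟩
  intro x hx τ hτ
  have hx2 : (2:ℝ) ≤ x := hx
  have hx0 : (0:ℝ) < x := by linarith
  have hx1 : (1:ℝ) ≤ x := by linarith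
  have hlog : 0 < Real.log x := Real.log_pos (by linarith)
  set F := (Finset.Icc ⌈x⌉₊ ⌊2*x⌋₊).filter (fun p : ℕ => p.Prime ∧ ¬ ((p:ℤ) ∣ u)) with hF
  have hterm : ∀ p ∈ F,
      norm
        (((1 / (p:ℂ)) * ∑ k ∈ Finset.Icc 1 (p-1),
            Complex.exp (2 * Real.pi * Complex.I * (-(u:ℂ) * (k:ℂ) / (p:ℂ)))) *
          (∑ n ∈ (Finset.Icc 1 (p-1)).filter (fun n => Nat.gcd n (p-1) = 1),
            Complex.exp (2 * Real.pi * Complex.I * ((τ p : ℂ) ^ n / (p:ℂ)))))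
        ≤ 8 * x ^ (-(1:ℝ)/10) := by
    intro p hpF
    rw [hF, Finset.mem_filter, Finset.mem_Icc] at hpF
    obtain ⟨⟨hple, hpge⟩, hprime, hdvd⟩ := hpF
    haveI : Fact p.Prime := ⟨hprime⟩
    have hxp : x ≤ (p:ℝ) := le_trans (Nat.le_ceil x) (by exact_mod_cast hple)
    have hp2x : (p:ℝ) ≤ 2*x := le_trans (by exact_mod_cast hpge) (Nat.floor_le (by positivity))
    have hord := hτ p hprime hxp hp2x hdvd
    refine le_trans (HPE.term_bound u (τ p) hdvd hord) ?_
    have := Real.rpow_le_rpow_of_nonpos hx0 hxp (by norm_num : -(1:ℝ)/10 ≤ 0)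
    linarith
  have hsum := Finset.sum_le_card_nsmul F _ _ hterm
  rw [nsmul_eq_mul] at hsum
  have hcard : (F.card : ℝ) ≤ 3 * x := by
    have h1 : F.card ≤ (Finset.Icc ⌈x⌉₊ ⌊2*x⌋₊).card := Finset.card_filter_le _ _
    rw [Nat.card_Icc] at h1
    have h3 : F.card ≤ ⌊2*x⌋₊ + 1 := by omega
    have h4 : (F.card:ℝ) ≤ (⌊2*x⌋₊:ℝ) + 1 := by exact_mod_cast h3
    have h2 : (⌊2*x⌋₊ : ℝ) ≤ 2*x := Nat.floor_le (by positivity)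
    linarith
  have hxpow : x * x ^ (-(1:ℝ)/10) = x ^ ((9:ℝ)/10) := by
    nth_rewrite 1 [← Real.rpow_one x]
    rw [← Real.rpow_add hx0]
    norm_num
  have hA : (F.card : ℝ) * (8 * x ^ (-(1:ℝ)/10)) ≤ 24 * x ^ ((9:ℝ)/10) := by
    have hpow_nonneg : (0:ℝ) ≤ 8 * x ^ (-(1:ℝ)/10) := by positivity
    calc (F.card : ℝ) * (8 * x ^ (-(1:ℝ)/10))
        ≤ (3*x) * (8 * x ^ (-(1:ℝ)/10)) := mul_le_mul_of_nonneg_right hcard hpow_nonneg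
      _ = 24 * (x * x ^ (-(1:ℝ)/10)) := by ring
      _ = 24 * x ^ ((9:ℝ)/10) := by rw [hxpow]
  refine le_trans hsum ?_
  rw [le_div_iff₀ hlog]
  have hlogle : Real.log x ≤ (80/3) * x ^ ((3:ℝ)/80) := by
    have h := Real.log_le_rpow_div hx0.le (by norm_num : (0:ℝ) < 3/80)
    have heq : x ^ ((3:ℝ)/80) / (3/80) = (80/3) * x ^ ((3:ℝ)/80) := by ring
    linarith
  calc (F.card : ℝ) * (8 * x ^ (-(1:ℝ)/10)) * Real.log x
      ≤ (24 * x ^ ((9:ℝ)/10)) * ((80/3) * x ^ ((3:ℝ)/80)) := by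
        apply mul_le_mul hA hlogle hlog.le (by positivity)
    _ = 640 * (x ^ ((9:ℝ)/10) * x ^ ((3:ℝ)/80)) := by ring
    _ = 640 * x ^ ((15:ℝ)/16) := by rw [← Real.rpow_add hx0]; norm_num
    _ ≤ 640 * x ^ (1 - ε) := by
        have := Real.rpow_le_rpow_of_exponent_le hx1 (by linarith : (15:ℝ)/16 ≤ 1 - ε)
        linarith
end
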